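/- Let η_n → η vaguely in M_p([0,1] × E), where η is a Radon point measure with η({0,1} × E) = 0 = η([0,1] × {±∞}). Let φ_+, φ_- ≥ 0 and define M(σ)(t) = ⋁_{t_i ≤ t} |x_i|(φ_+ 1_{{x_i>0}} + φ_- 1_{{x_i<0}}) for a point measure σ = Σ_i δ_{(t_i,x_i)} (with sup∅ = 0). Then for every t ∈ [0,1] with η({t} × E) = 0, M(η_n)(t) → M(η)(t) as n → ∞; consequently, since M(η_n) and M(η) are nondecreasing càdlàg functions, d_{M_2}(M(η_n), M(η)) → 0. -/

import Mathlib

open MeasureTheory Filter Topology Set ProbabilityTheory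
open scoped ENNReal NNReal

noncomputable section

namespace LinProc

/-! ### Càdlàg paths on `[0,1]` and Skorohod `M₂` distances -/

/-- A function `f : ℝ → ℝ` is càdlàg on `[0,1]`: right-continuous on `[0,1)` and
with left limits on `(0,1]`. -/
def IsCadlag (f : ℝ → ℝ) : Prop :=
  (∀ t ∈ Set.Ico (0:ℝ) 1, Filter.Tendsto f (nhdsWithin t (Set.Ioi t)) (nhds (f t))) ∧
  (∀ t ∈ Set.Ioc (0:ℝ) 1, ∃ l : ℝ, Filter.Tendsto f (nhdsWithin t (Set.Iio t)) (nhds l))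

/-- The left limit `f(t-)`, with the convention `f(0-) = f 0`. -/
def llim (f : ℝ → ℝ) (t : ℝ) : ℝ :=
  if t ≤ 0 then f 0 else Function.leftLim f t

/-- The metric `d(a,b) = |a₁-b₁| ∨ |a₂-b₂|` on `ℝ²`. -/
def dRect (a b : ℝ × ℝ) : ℝ := max |a.1 - b.1| |a.2 - b.2|

/-- The completed (thin) graph of `f` over `[0,1]`:
all points `(t, z)` with `t ∈ [0,1]` and `z` on the segment between `f(t-)` and `f(t)`. -/
def completedGraph (f : ℝ → ℝ) : Set (ℝ × ℝ) :=
  {p | p.1 ∈ Set.Icc (0:ℝ) 1 ∧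
    ∃ lam ∈ Set.Icc (0:ℝ) 1, p.2 = lam * llim f p.1 + (1 - lam) * f p.1}

/-- One-sided Hausdorff gap between completed graphs. -/
def graphGap (f g : ℝ → ℝ) : ℝ :=
  sSup ((fun a => sInf (dRect a '' completedGraph g)) '' completedGraph f)

/-- The Skorohod `M₂` metric on `D([0,1],ℝ)`: the Hausdorff distance (w.r.t. `dRect`)
between the completed graphs. -/
def dM2 (f g : ℝ → ℝ) : ℝ := max (graphGap f g) (graphGap g f)

/-- The metric `d_p` inducing the weak `M₂` (product) topology on `D([0,1],ℝ²)`,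
where an element of `D([0,1],ℝ²)` is recorded as a pair of real càdlàg functions. -/
def dProd (x y : (ℝ → ℝ) × (ℝ → ℝ)) : ℝ := max (dM2 x.1 y.1) (dM2 x.2 y.2)

/-! ### Convergence in distribution w.r.t. a distance function -/

/-- Convergence in distribution, along a filter `l`, of random elements of a space `S`
equipped with a distance function `d` : tested against all bounded functions `F : S → ℝ`
that are continuous with respect to `d` (measurability of the compositions is required
so that the integrals are meaningful). -/
def TendstoInDistr {ι Ω Ω' S : Type*} [MeasurableSpace Ω] [MeasurableSpace Ω']
    (l : Filter ι) (P : Measure Ω) (P' : Measure Ω') (d : S → S → ℝ)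
    (X : ι → Ω → S) (Y : Ω' → S) : Prop :=
  ∀ F : S → ℝ, (∃ C : ℝ, ∀ s, |F s| ≤ C) →
    (∀ s : S, ∀ ε > (0:ℝ), ∃ δ > (0:ℝ), ∀ s', d s s' < δ → |F s' - F s| < ε) →
    (∀ i, AEStronglyMeasurable (fun ω => F (X i ω)) P) →
    AEStronglyMeasurable (fun ω => F (Y ω)) P' →
    Filter.Tendsto (fun i => ∫ ω, F (X i ω) ∂P) l (𝓝 (∫ ω, F (Y ω) ∂P'))

/-! ### Regular variation -/

/-- `L` is slowly varying at `∞`. -/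
def SlowlyVarying (L : ℝ → ℝ) : Prop :=
  (∀ᶠ x in atTop, 0 < L x) ∧
    ∀ c > (0:ℝ), Filter.Tendsto (fun x => L (c * x) / L x) atTop (𝓝 1)

/-- `Z` has a regularly varying (two-sided) tail with index `α`:
`P(|Z| > x) = x^{-α} L(x)` for a slowly varying `L`. -/
def RegVarAbs {Ω : Type*} [MeasurableSpace Ω] (P : Measure Ω) (Z : Ω → ℝ) (α : ℝ) : Prop :=
  0 < α ∧ ∃ L : ℝ → ℝ, SlowlyVarying L ∧
    ∀ x > (0:ℝ), (P {ω | x < |Z ω|}).toReal = x ^ (-α) * L x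

/-- `Z` is regularly varying with index `α` and tail balance parameters `p`, `r`. -/
def RegVar {Ω : Type*} [MeasurableSpace Ω] (P : Measure Ω) (Z : Ω → ℝ)
    (α p r : ℝ) : Prop :=
  RegVarAbs P Z α ∧
    Filter.Tendsto
      (fun x : ℝ => (P {ω | x < Z ω}).toReal / (P {ω | x < |Z ω|}).toReal)
      atTop (𝓝 p) ∧
    Filter.Tendsto
      (fun x : ℝ => (P {ω | Z ω ≤ -x}).toReal / (P {ω | x < |Z ω|}).toReal)
      atTop (𝓝 r)

/-- The normalizing sequence `(aₙ)`: positive with `n P(|Z| > aₙ) → 1`. -/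
def NormSeq {Ω : Type*} [MeasurableSpace Ω] (P : Measure Ω) (Z : Ω → ℝ) (a : ℕ → ℝ) : Prop :=
  (∀ n, 0 < a n) ∧
    Filter.Tendsto (fun n : ℕ => (n : ℝ) * (P {ω | a n < |Z ω|}).toReal) atTop (𝓝 1)

/-- An i.i.d. family of real random variables. -/
def IID {Ω ι : Type*} [MeasurableSpace Ω] (P : Measure Ω) (Z : ι → Ω → ℝ) : Prop :=
  (∀ i, Measurable (Z i)) ∧
    ProbabilityTheory.iIndepFun Z P ∧
    ∀ i j, P.map (Z i) = P.map (Z j)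

/-- `Z` is symmetric: `Z` and `-Z` have the same law. -/
def Symmetric' {Ω : Type*} [MeasurableSpace Ω] (P : Measure Ω) (Z : Ω → ℝ) : Prop :=
  P.map Z = P.map (fun ω => -(Z ω))

/-! ### The limit measures -/

/-- The Lévy measure `μ(dx) = (p 1_{(0,∞)}(x) + r 1_{(-∞,0)}(x)) α |x|^{-α-1} dx`. -/
def levyMeasure (α p r : ℝ) : Measure ℝ :=
  volume.withDensity fun x =>
    ENNReal.ofReal ((if 0 < x then p else if x < 0 then r else 0) * α * |x| ^ (-α - 1))

/-- The exponent measure `ν(dx) = (φ₊^α p + φ₋^α r) α x^{-α-1} 1_{(0,∞)}(x) dx`. -/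
def extremalMeasure (α p r φp φm : ℝ) : Measure ℝ :=
  volume.withDensity fun x =>
    ENNReal.ofReal (if 0 < x then (φp ^ α * p + φm ^ α * r) * α * x ^ (-α - 1) else 0)

/-! ### Lévy processes and extremal processes on `[0,1]` -/

/-- `V` is a Lévy process on `[0,1]` with characteristic triple `(0, ν, b)`. -/
structure IsLevy {Ω : Type*} [MeasurableSpace Ω] (P : Measure Ω) (V : Ω → ℝ → ℝ)
    (ν : Measure ℝ) (b : ℝ) : Prop where
  meas : ∀ t, Measurable fun ω => V ω t
  start : ∀ᵐ ω ∂P, V ω 0 = 0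
  cadlag : ∀ᵐ ω ∂P, IsCadlag (V ω)
  indepIncr : ∀ (n : ℕ) (t : Fin (n+1) → ℝ), Monotone t →
    (∀ i, t i ∈ Set.Icc (0:ℝ) 1) →
    ProbabilityTheory.iIndepFun
      (fun i : Fin n => fun ω => V ω (t i.succ) - V ω (t i.castSucc)) P
  statIncr : ∀ s t : ℝ, 0 ≤ s → s ≤ t → t ≤ 1 →
    P.map (fun ω => V ω t - V ω s) = P.map (fun ω => V ω (t - s))
  charFun : ∀ t ∈ Set.Icc (0:ℝ) 1, ∀ z : ℝ,
    ∫ ω, Complex.exp (Complex.I * z * V ω t) ∂P =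
      Complex.exp (t * (Complex.I * b * z +
        ∫ x : ℝ, (Complex.exp (Complex.I * z * x) - 1 -
          Complex.I * z * x * Set.indicator (Set.Icc (-1:ℝ) 1) (fun _ => (1:ℂ)) x) ∂ν))

/-- `W` is an extremal process on `[0,1]` with exponent measure `ν`: its finite-dimensional
distributions are `P(W(t₁) ≤ x₁, …, W(t_k) ≤ x_k)
 = ∏ᵢ exp(-(tᵢ - tᵢ₋₁) ν(minⱼ≥ᵢ xⱼ, ∞))` for `0 < t₁ < ⋯ < t_k ≤ 1` and `xᵢ > 0`. -/
structure IsExtremal {Ω : Type*} [MeasurableSpace Ω] (P : Measure Ω) (W : Ω → ℝ → ℝ)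
    (ν : Measure ℝ) : Prop where
  meas : ∀ t, Measurable fun ω => W ω t
  fdd : ∀ (k : ℕ) (t x : Fin (k+1) → ℝ), StrictMono t → 0 < t 0 → t (Fin.last k) ≤ 1 →
    (∀ i, 0 < x i) →
    P {ω | ∀ i, W ω (t i) ≤ x i} =
      ENNReal.ofReal (Real.exp (-(∑ i : Fin (k+1),
        (t i - if h : i = 0 then 0 else t (Fin.castSucc (i.pred h))) *
          (ν (Set.Ioi (sInf (x '' {j | i ≤ j})))).toReal)))

/-! ### Poisson point processes on `[0,1] × (ℝ \ {0})` -/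

/-- The number of points of the family `pts` lying in `A` (in `ℝ≥0∞`). -/
def ptCount (pts : ℕ → ℝ × ℝ) (A : Set (ℝ × ℝ)) : ℝ≥0∞ :=
  ∑' i, A.indicator (fun _ => (1:ℝ≥0∞)) (pts i)

/-- `pts` is a Poisson point process with (σ-finite, atomless on single points) intensity
measure `m`: counts of disjoint sets are independent, and the count of any set of finite
intensity is Poisson distributed. -/
def IsPoissonPP {Ω : Type*} [MeasurableSpace Ω] (P : Measure Ω)
    (pts : Ω → ℕ → ℝ × ℝ) (m : Measure (ℝ × ℝ)) : Prop :=
  (∀ i, Measurable fun ω => pts ω i) ∧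
  (∀ A : Set (ℝ × ℝ), MeasurableSet A → m A ≠ ∞ → ∀ k : ℕ,
    P {ω | ptCount (pts ω) A = k} =
      ENNReal.ofReal (Real.exp (-(m A).toReal) * (m A).toReal ^ k / (Nat.factorial k))) ∧
  (∀ (n : ℕ) (A : Fin n → Set (ℝ × ℝ)), (∀ i, MeasurableSet (A i)) →
    Pairwise (Function.onFun Disjoint A) →
    ProbabilityTheory.iIndepFun
      (fun i ω => ptCount (pts ω) (A i)) P)

/-- The weight `|x| (φ₊ 1_{x>0} + φ₋ 1_{x<0})`. -/
def wt (φp φm : ℝ) (x : ℝ) : ℝ := |x| * (if 0 < x then φp else if x < 0 then φm else 0)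

/-- First component of the sum–maximum functional of a point family:
`β Σ_{tᵢ ≤ t} xᵢ 1_{u < |xᵢ|}`. -/
def ppSum (β u : ℝ) (pts : ℕ → ℝ × ℝ) (t : ℝ) : ℝ :=
  β * ∑' i, if (pts i).1 ≤ t ∧ u < |(pts i).2| then (pts i).2 else 0

/-- Second component of the sum–maximum functional:
`⋁_{tᵢ ≤ t} |xᵢ| (φ₊ 1_{xᵢ>0} + φ₋ 1_{xᵢ<0})`, with `sup ∅ = 0`. -/
def ppMax (φp φm : ℝ) (pts : ℕ → ℝ × ℝ) (t : ℝ) : ℝ :=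
  sSup (insert 0 {v | ∃ i, (pts i).1 ≤ t ∧ v = wt φp φm (pts i).2})

/-! ### Partial sum and partial maxima processes -/

/-- Partial-sum process `t ↦ (Σ_{i=1}^{⌊nt⌋} Y_i - ⌊nt⌋ b) / a`. -/
def sumProc (a b : ℝ) (Y : ℕ → ℝ) (n : ℕ) (t : ℝ) : ℝ :=
  ((∑ i ∈ Finset.range ⌊(n:ℝ) * t⌋₊, Y (i+1)) - (⌊(n:ℝ) * t⌋₊ : ℝ) * b) / a

/-- Partial-maxima process `t ↦ (⋁_{i=1}^{⌊nt⌋} Y_i) / a` (with value `0` for `⌊nt⌋ = 0`). -/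
def maxProc (a : ℝ) (Y : ℕ → ℝ) (n : ℕ) (t : ℝ) : ℝ :=
  if h : ⌊(n:ℝ) * t⌋₊ = 0 then 0 else
    ((Finset.range ⌊(n:ℝ) * t⌋₊).sup' (Finset.nonempty_range_iff.mpr h)
      (fun i => Y (i+1))) / a

/-- `φ₊ = max{φⱼ ∨ 0 : 0 ≤ j ≤ q}` for finitely many coefficients. -/
def phiPlusFin (q : ℕ) (φ : ℕ → ℝ) : ℝ :=
  (Finset.range (q+1)).sup' (Finset.nonempty_range_iff.mpr (Nat.succ_ne_zero q))
    fun j => max (φ j) 0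

/-- `φ₋ = max{-φⱼ ∨ 0 : 0 ≤ j ≤ q}` for finitely many coefficients. -/
def phiMinusFin (q : ℕ) (φ : ℕ → ℝ) : ℝ :=
  (Finset.range (q+1)).sup' (Finset.nonempty_range_iff.mpr (Nat.succ_ne_zero q))
    fun j => max (-φ j) 0

/-- `φ₊ = sup{φⱼ ∨ 0 : j ≥ 0}`. -/
def phiPlus (φ : ℕ → ℝ) : ℝ := ⨆ j : ℕ, max (φ j) 0

/-- `φ₋ = sup{-φⱼ ∨ 0 : j ≥ 0}`. -/
def phiMinus (φ : ℕ → ℝ) : ℝ := ⨆ j : ℕ, max (-φ j) 0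



/-! ### Radon point measures on `[0,1] × E`, `E = [-∞,∞] \ {0}` -/

/-- The point measure `Σᵢ δ_{pᵢ}` associated with a family of optional points in
`[0,1] × [-∞,∞]` (unused indices carry `none`). -/
def pmMeasure (pts : ℕ → Option (ℝ × EReal)) : Measure (ℝ × EReal) :=
  Measure.sum fun i => (pts i).elim 0 fun p => Measure.dirac p

/-- The points of `pts` lie in `[0,1] × E`, `E = [-∞,∞] \ {0}`. -/
def pmSupported (pts : ℕ → Option (ℝ × EReal)) : Prop :=
  ∀ i p, pts i = some p → p.1 ∈ Set.Icc (0:ℝ) 1 ∧ p.2 ≠ 0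

/-- Radon property: only finitely many points outside every neighbourhood `(-δ,δ)` of `0`. -/
def pmRadon (pts : ℕ → Option (ℝ × EReal)) : Prop :=
  ∀ δ : ℝ, 0 < δ →
    {i : ℕ | ∃ p, pts i = some p ∧ (p.2 ≤ -(δ:EReal) ∨ (δ:EReal) ≤ p.2)}.Finite

/-- Vague convergence of the point measures on `[0,1] × E`: convergence of integrals of
continuous functions vanishing on a neighbourhood of `{x = 0}` (such functions have
compactly contained support in `[0,1] × E`). -/
def VagueTendsto (pm : ℕ → (ℕ → Option (ℝ × EReal))) (pm0 : ℕ → Option (ℝ × EReal)) : Prop :=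
  ∀ f : ℝ × EReal → ℝ, Continuous f →
    (∃ δ : ℝ, 0 < δ ∧ ∀ p : ℝ × EReal, -(δ:EReal) < p.2 → p.2 < (δ:EReal) → f p = 0) →
    Filter.Tendsto (fun n => ∫ p, f p ∂(pmMeasure (pm n))) atTop
      (𝓝 (∫ p, f p ∂(pmMeasure pm0)))

/-- The weight `|x| (φ₊ 1_{x>0} + φ₋ 1_{x<0})` for `x ∈ [-∞,∞]` (real value; by convention
the weight of an infinite point is `0`). -/
def wtE (φp φm : ℝ) (x : EReal) : ℝ :=
  (if 0 < x then φp else if x < 0 then φm else 0) * |x.toReal|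

/-- `Φ^{(u)}` first component: `β Σ_{tᵢ ≤ t} xᵢ 1_{u < |xᵢ| < ∞}`. -/
def phiSumE (β u : ℝ) (pts : ℕ → Option (ℝ × EReal)) (t : ℝ) : ℝ :=
  β * ∑' i, (pts i).elim 0 fun p =>
    if p.1 ≤ t ∧ ((u:EReal) < p.2 ∨ p.2 < -(u:EReal)) ∧ p.2 ≠ ⊤ ∧ p.2 ≠ ⊥
    then p.2.toReal else 0

/-- `Φ^{(u)}` second component: `⋁_{tᵢ ≤ t} |xᵢ| (φ₊ 1_{xᵢ>0} + φ₋ 1_{xᵢ<0})`, `sup ∅ = 0`. -/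
def phiMaxE (φp φm : ℝ) (pts : ℕ → Option (ℝ × EReal)) (t : ℝ) : ℝ :=
  sSup (insert 0 {v | ∃ i p, pts i = some p ∧ p.1 ≤ t ∧ v = wtE φp φm p.2})

/-! ### The `M₁` oscillation function and the metric `d_{M₁}^*` -/

/-- The oscillation `ω(x,δ) = sup_{t} sup_{0∨(t-δ) ≤ t₁<t₂<t₃ ≤ (t+δ)∧1}
‖x(t₂) - [x(t₁),x(t₃)]‖`. -/
def osc (x : ℝ → ℝ) (δ : ℝ) : ℝ :=
  sSup (insert 0 {v | ∃ t ∈ Set.Icc (0:ℝ) 1, ∃ t₁ t₂ t₃ : ℝ,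
    max 0 (t - δ) ≤ t₁ ∧ t₁ < t₂ ∧ t₂ < t₃ ∧ t₃ ≤ min (t + δ) 1 ∧
    v = Metric.infDist (x t₂) (Set.uIcc (x t₁) (x t₃))})

/-- `ω̂(x,z) = ω(x, e^z)` for `z < 0` and `ω(x,1)` for `z ≥ 0`. -/
def oscHat (x : ℝ → ℝ) (z : ℝ) : ℝ :=
  if z < 0 then osc x (Real.exp z) else osc x 1

/-- The Lévy metric `λ(F₁,F₂) = inf{ε > 0 : F₂(y-ε) - ε ≤ F₁(y) ≤ F₂(y+ε) + ε ∀y}`. -/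
def levyMetric (F G : ℝ → ℝ) : ℝ :=
  sInf {ε : ℝ | 0 < ε ∧ ∀ y : ℝ, G (y - ε) - ε ≤ F y ∧ F y ≤ G (y + ε) + ε}


/-- The complete metric `d_{M₁}^*(x₁,x₂) = d_{M₂}(x₁,x₂) + λ(ω̂(x₁,·), ω̂(x₂,·))`,
topologically equivalent to the Skorohod `M₁` metric. -/
def dM1star (f g : ℝ → ℝ) : ℝ := dM2 f g + levyMetric (oscHat f) (oscHat g)

/-- The metric `d_p^*` : `M₂` on the first coordinate, `M₁` on the second. -/
def dProdStar (x y : (ℝ → ℝ) × (ℝ → ℝ)) : ℝ := max (dM2 x.1 y.1) (dM1star x.2 y.2)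


/-! ### Auxiliary lemmas for Statement 5 -/

section WtE
variable {φp φm : ℝ}

lemma wtE_coe (t : ℝ) :
    wtE φp φm (t : EReal) = (if 0 < t then φp else if t < 0 then φm else 0) * |t| := by
  simp only [wtE, EReal.toReal_coe]
  congr 1
  simp [EReal.coe_pos, EReal.coe_neg']

lemma wtE_top : wtE φp φm ⊤ = 0 := by simp [wtE]

lemma wtE_bot : wtE φp φm ⊥ = 0 := by simp [wtE]

lemma wtE_nonneg (hφp : 0 ≤ φp) (hφm : 0 ≤ φm) (x : EReal) : 0 ≤ wtE φp φm x := by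
  unfold wtE
  have h : (0:ℝ) ≤ (if 0 < x then φp else if x < 0 then φm else 0) := by
    split_ifs <;> simp [hφp, hφm]
  exact mul_nonneg h (abs_nonneg _)

lemma wtE_le (hφp : 0 ≤ φp) (hφm : 0 ≤ φm) (x : EReal) :
    wtE φp φm x ≤ max φp φm * |x.toReal| := by
  unfold wtE
  apply mul_le_mul_of_nonneg_right _ (abs_nonneg _)
  split_ifs
  · exact le_max_left _ _
  · exact le_max_right _ _
  · positivity

/-- From a positive lower bound on the weight, obtain finiteness and a bound on `|toReal|`. -/
lemma wtE_big (hφp : 0 ≤ φp) (hφm : 0 ≤ φm) {x : EReal} {z : ℝ} (hz : 0 < z)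
    (h : z ≤ wtE φp φm x) :
    x ≠ ⊤ ∧ x ≠ ⊥ ∧ 0 < max φp φm ∧ z / max φp φm ≤ |x.toReal| ∧
      (x ≤ -(((z / max φp φm):ℝ):EReal) ∨ (((z / max φp φm):ℝ):EReal) ≤ x) := by
  have hle := wtE_le hφp hφm x
  have h1 : z ≤ max φp φm * |x.toReal| := h.trans hle
  have hc0 : 0 < max φp φm := by
    by_contra hc
    push_neg at hc
    nlinarith [abs_nonneg x.toReal]
  have h2 : z / max φp φm ≤ |x.toReal| := (div_le_iff₀' hc0).2 h1
  have ht0 : x.toReal ≠ 0 := by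
    intro h0
    rw [h0] at h1; simp at h1; nlinarith
  have hxt : x ≠ ⊤ := by intro hx; rw [hx] at ht0; simp at ht0
  have hxb : x ≠ ⊥ := by intro hx; rw [hx] at ht0; simp at ht0
  refine ⟨hxt, hxb, hc0, h2, ?_⟩
  rcases abs_cases x.toReal with ⟨he, _⟩ | ⟨he, _⟩
  · right
    rw [← EReal.coe_toReal hxt hxb]
    exact EReal.coe_le_coe_iff.2 (by linarith)
  · left
    rw [← EReal.coe_toReal hxt hxb, ← EReal.coe_neg]
    exact EReal.coe_le_coe_iff.2 (by linarith)

end WtE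

lemma EReal.abs_toReal_lt {x : EReal} {δ : ℝ} (h1 : -(δ:EReal) < x) (h2 : x < (δ:EReal)) :
    x ≠ ⊤ ∧ x ≠ ⊥ ∧ |x.toReal| < δ := by
  have hxt : x ≠ ⊤ := h2.ne_top
  have hxb : x ≠ ⊥ := by
    intro hb
    rw [hb, ← EReal.coe_neg] at h1
    exact absurd h1 (by simp)
  refine ⟨hxt, hxb, ?_⟩
  rw [← EReal.coe_toReal hxt hxb] at h1 h2
  rw [← EReal.coe_neg] at h1
  rw [abs_lt]
  exact ⟨EReal.coe_lt_coe_iff.1 h1, EReal.coe_lt_coe_iff.1 h2⟩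


section PhiMax
variable {φp φm : ℝ} {pts : ℕ → Option (ℝ × EReal)}

/-- A uniform bound on all weights of points of a Radon family. -/
lemma exists_wt_bound (hφp : 0 ≤ φp) (hφm : 0 ≤ φm) (hrad : pmRadon pts) :
    ∃ C : ℝ, 0 ≤ C ∧ ∀ i p, pts i = some p → wtE φp φm p.2 ≤ C := by
  classical
  set S := (hrad 1 one_pos).toFinset with hS
  have hnn : ∀ j, (0:ℝ) ≤ (pts j).elim 0 (fun p => wtE φp φm p.2) := by
    intro j
    cases h : pts j with
    | none => simp
    | some q => simpa using wtE_nonneg hφp hφm q.2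
  have hc0 : (0:ℝ) ≤ max φp φm := le_trans hφp (le_max_left _ _)
  have hsum : (0:ℝ) ≤ ∑ i ∈ S, (pts i).elim 0 (fun p => wtE φp φm p.2) :=
    Finset.sum_nonneg fun i _ => hnn i
  refine ⟨max φp φm + ∑ i ∈ S, (pts i).elim 0 (fun p => wtE φp φm p.2), by linarith, ?_⟩
  intro i p hip
  by_cases hi : i ∈ S
  · have hterm := Finset.single_le_sum (f := fun j => (pts j).elim 0 (fun p => wtE φp φm p.2))
      (fun j _ => hnn j) hi
    simp only [hip, Option.elim_some] at hterm
    linarith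
  · have hnot : ¬ (p.2 ≤ -((1:ℝ):EReal) ∨ ((1:ℝ):EReal) ≤ p.2) := by
      intro hcon
      exact hi (by rw [hS, Set.Finite.mem_toFinset]; exact ⟨p, hip, hcon⟩)
    push_neg at hnot
    obtain ⟨h1, h2⟩ := hnot
    obtain ⟨_, _, habs⟩ := EReal.abs_toReal_lt h1 h2
    have := wtE_le hφp hφm p.2
    nlinarith

lemma phiMaxE_bddAbove (hφp : 0 ≤ φp) (hφm : 0 ≤ φm) (hrad : pmRadon pts) (t : ℝ) :
    BddAbove (insert 0 {v | ∃ i p, pts i = some p ∧ p.1 ≤ t ∧ v = wtE φp φm p.2}) := by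
  obtain ⟨C, hC0, hC⟩ := exists_wt_bound hφp hφm hrad
  refine ⟨C, ?_⟩
  rintro v (rfl | ⟨i, p, hip, -, rfl⟩)
  · exact hC0
  · exact hC i p hip

lemma phiMaxE_nonneg (hφp : 0 ≤ φp) (hφm : 0 ≤ φm) (hrad : pmRadon pts) (t : ℝ) :
    0 ≤ phiMaxE φp φm pts t :=
  le_csSup (phiMaxE_bddAbove hφp hφm hrad t) (Set.mem_insert _ _)

lemma le_phiMaxE (hφp : 0 ≤ φp) (hφm : 0 ≤ φm) (hrad : pmRadon pts) {t : ℝ} {i : ℕ}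
    {p : ℝ × EReal} (hip : pts i = some p) (hpt : p.1 ≤ t) :
    wtE φp φm p.2 ≤ phiMaxE φp φm pts t :=
  le_csSup (phiMaxE_bddAbove hφp hφm hrad t) (Set.mem_insert_iff.2 (Or.inr ⟨i, p, hip, hpt, rfl⟩))

lemma phiMaxE_le {t c : ℝ} (hc : 0 ≤ c)
    (h : ∀ i p, pts i = some p → p.1 ≤ t → wtE φp φm p.2 ≤ c) :
    phiMaxE φp φm pts t ≤ c := by
  apply Real.sSup_le _ hc
  rintro v (rfl | ⟨i, p, hip, hpt, rfl⟩)
  · exact hc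
  · exact h i p hip hpt

lemma phiMaxE_mono (hφp : 0 ≤ φp) (hφm : 0 ≤ φm) (hrad : pmRadon pts) :
    Monotone (phiMaxE φp φm pts) := by
  intro s t hst
  apply csSup_le_csSup (phiMaxE_bddAbove hφp hφm hrad t) ⟨0, Set.mem_insert _ _⟩
  rintro v (rfl | ⟨i, p, hip, hpt, rfl⟩)
  · exact Set.mem_insert _ _
  · exact Set.mem_insert_iff.2 (Or.inr ⟨i, p, hip, hpt.trans hst, rfl⟩)

lemma lt_phiMaxE {t c : ℝ} (hc : 0 ≤ c) (h : c < phiMaxE φp φm pts t) :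
    ∃ i p, pts i = some p ∧ p.1 ≤ t ∧ c < wtE φp φm p.2 := by
  obtain ⟨v, hv, hcv⟩ := exists_lt_of_lt_csSup ⟨0, Set.mem_insert _ _⟩ h
  rcases hv with rfl | ⟨i, p, hip, hpt, rfl⟩
  · exact absurd hcv (not_lt.2 hc)
  · exact ⟨i, p, hip, hpt, hcv⟩

end PhiMax

lemma integral_pmMeasure {pts : ℕ → Option (ℝ × EReal)} (hrad : pmRadon pts)
    {δ : ℝ} (hδ : 0 < δ) {f : ℝ × EReal → ℝ} (hf : Continuous f)
    (hvan : ∀ p : ℝ × EReal, -(δ:EReal) < p.2 → p.2 < (δ:EReal) → f p = 0) :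
    ∫ p, f p ∂(pmMeasure pts) = ∑ i ∈ (hrad δ hδ).toFinset, (pts i).elim 0 f := by
  classical
  set S := (hrad δ hδ).toFinset with hS
  have hvan' : ∀ i ∉ S, (pts i).elim 0 f = 0 := by
    intro i hi
    cases h : pts i with
    | none => rfl
    | some p =>
      simp only [Option.elim_some]
      have : ¬ (p.2 ≤ -(δ:EReal) ∨ (δ:EReal) ≤ p.2) := by
        intro hcon
        exact hi (by rw [hS, Set.Finite.mem_toFinset]; exact ⟨p, h, hcon⟩)
      push_neg at this
      exact hvan p this.1 this.2
  have hInt : Integrable f (pmMeasure pts) := by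
    refine ⟨hf.aestronglyMeasurable, ?_⟩
    rw [HasFiniteIntegral, pmMeasure, lintegral_sum_measure]
    have heq : ∀ i, ∫⁻ p, (‖f p‖₊ : ENNReal) ∂((pts i).elim 0 fun p => Measure.dirac p) =
        (pts i).elim 0 fun p => (‖f p‖₊ : ENNReal) := by
      intro i
      cases h : pts i with
      | none => simp
      | some p => simp [lintegral_dirac]
    simp only [enorm_eq_nnnorm]
    rw [tsum_congr heq, tsum_eq_sum (s := S)
      (fun i hi => by rw [show ((pts i).elim 0 fun p => (‖f p‖₊ : ENNReal)) =
        (‖(pts i).elim 0 f‖₊ : ENNReal) by cases h : pts i <;> simp, hvan' i hi]; simp)]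
    exact ENNReal.sum_lt_top.2 fun i _ => by
      cases h : pts i <;> simp [ENNReal.coe_lt_top]
  rw [pmMeasure, integral_sum_measure (by rw [pmMeasure] at hInt; exact hInt)]
  have heq : ∀ i, ∫ p, f p ∂((pts i).elim 0 fun p => Measure.dirac p) =
      (pts i).elim 0 f := by
    intro i
    cases h : pts i with
    | none => simp
    | some p => simp [integral_dirac]
  rw [tsum_congr heq]
  exact tsum_eq_sum hvan'


lemma coe_min' (a b : ℝ) : ((min a b : ℝ) : EReal) = min (a:EReal) (b:EReal) := by
  rcases le_total a b with h|h <;> simp [min_eq_left, min_eq_right, h, EReal.coe_le_coe_iff]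

lemma coe_max' (a b : ℝ) : ((max a b : ℝ) : EReal) = max (a:EReal) (b:EReal) := by
  rcases le_total a b with h|h <;> simp [max_eq_left, max_eq_right, h, EReal.coe_le_coe_iff]

/-- Clamp an extended real into `[a,b]`, yielding a real number. -/
def clampE (a b : ℝ) (y : EReal) : ℝ := (max (a:EReal) (min (b:EReal) y)).toReal

lemma clampE_coe (a b t : ℝ) : clampE a b (t : EReal) = max a (min b t) := by
  rw [clampE, ← coe_min', ← coe_max', EReal.toReal_coe]

lemma clampE_top (a b : ℝ) : clampE a b ⊤ = max a b := by
  rw [clampE]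
  simp [← coe_max']

lemma clampE_bot (a b : ℝ) : clampE a b ⊥ = a := by
  rw [clampE]
  simp

lemma continuous_clampE (a b : ℝ) : Continuous (clampE a b) := by
  rw [continuous_iff_continuousAt]
  intro y
  have h1 : max (a:EReal) (min (b:EReal) y) ≠ ⊤ := by
    have hle : max (a:EReal) (min (b:EReal) y) ≤ max (a:EReal) (b:EReal) :=
      max_le_max le_rfl (min_le_left _ _)
    have hlt : max (a:EReal) (b:EReal) < ⊤ := by
      rw [← coe_max']
      exact EReal.coe_lt_top _
    exact ne_top_of_lt (lt_of_le_of_lt hle hlt)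
  have h2 : max (a:EReal) (min (b:EReal) y) ≠ ⊥ :=
    (lt_of_lt_of_le (EReal.bot_lt_coe a) (le_max_left _ _)).ne'
  exact ContinuousAt.comp (EReal.tendsto_toReal h1 h2)
    ((continuous_const.max (continuous_const.min continuous_id)).continuousAt)

lemma wtE_split {φp φm : ℝ} (s : ℝ) :
    wtE φp φm (s : EReal) = φp * max 0 s + φm * max 0 (-s) := by
  have hcoe : wtE φp φm (s : EReal) = (if 0 < s then φp else if s < 0 then φm else 0) * |s| := by
    simp only [wtE, EReal.toReal_coe]
    congr 1
    simp [EReal.coe_pos, EReal.coe_neg']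
  rw [hcoe]
  rcases lt_trichotomy s 0 with h | h | h
  · rw [if_neg (by linarith), if_pos h, abs_of_neg h,
      max_eq_left (by linarith), max_eq_right (by linarith)]
    ring
  · subst h; simp
  · rw [if_pos h, abs_of_pos h, max_eq_right (by linarith), max_eq_left (by linarith)]
    ring




section Upper
variable {φp φm : ℝ} {pm : ℕ → ℕ → Option (ℝ × EReal)} {pm0 : ℕ → Option (ℝ × EReal)}

lemma eventually_phiMaxE_le (hφp : 0 ≤ φp) (hφm : 0 ≤ φm)
    (hrad : ∀ n, pmRadon (pm n)) (hrad0 : pmRadon pm0)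
    (hfin : ∀ i p, pm0 i = some p → p.2 ≠ ⊤ ∧ p.2 ≠ ⊥)
    (hvague : VagueTendsto pm pm0) (t : ℝ) {ε : ℝ} (hε : 0 < ε) :
    ∀ᶠ n in atTop, phiMaxE φp φm (pm n) t ≤ phiMaxE φp φm pm0 t + ε := by
  classical
  have hA0 : 0 ≤ phiMaxE φp φm pm0 t := phiMaxE_nonneg hφp hφm hrad0 t
  set A := phiMaxE φp φm pm0 t with hAdef
  clear_value A
  by_cases hc0 : 0 < max φp φm
  case neg =>
    push_neg at hc0
    refine Filter.Eventually.of_forall fun n => ?_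
    refine phiMaxE_le (by linarith) fun i p hip hpt => ?_
    have h1 := wtE_le hφp hφm p.2
    have h2 := wtE_nonneg hφp hφm p.2
    nlinarith [abs_nonneg p.2.toReal, mul_nonpos_of_nonpos_of_nonneg hc0 (abs_nonneg p.2.toReal)]
  case pos =>
  have hBpos : 0 < A + ε/2 := by linarith
  have hAε : 0 < A + ε := by linarith
  -- truncation level R
  obtain ⟨R, hR0, hRp, hRm⟩ : ∃ R : ℝ, 0 ≤ R ∧ (0 < φp → A + ε ≤ φp * R) ∧
      (0 < φm → A + ε ≤ φm * R) := by
    refine ⟨(A+ε) * max (1/φp) 0 + (A+ε) * max (1/φm) 0, ?_, ?_, ?_⟩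
    · have h1 : (0:ℝ) ≤ max (1/φp) 0 := le_max_right _ _
      have h2 : (0:ℝ) ≤ max (1/φm) 0 := le_max_right _ _
      nlinarith
    · intro hp
      have h1 : max (1/φp) 0 = 1/φp := max_eq_left (by positivity)
      have h2 : (0:ℝ) ≤ (A+ε) * max (1/φm) 0 :=
        mul_nonneg hAε.le (le_max_right _ _)
      have h3 : φp * ((A+ε) * (1/φp)) = A+ε := by field_simp
      rw [h1, mul_add, h3]
      nlinarith [mul_nonneg hp.le h2]
    · intro hp
      have h1 : max (1/φm) 0 = 1/φm := max_eq_left (by positivity)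
      have h2 : (0:ℝ) ≤ (A+ε) * max (1/φp) 0 :=
        mul_nonneg hAε.le (le_max_right _ _)
      have h3 : φm * ((A+ε) * (1/φm)) = A+ε := by field_simp
      rw [h1, mul_add, h3]
      nlinarith [mul_nonneg hp.le h2]
  -- the truncated weight
  set wf : EReal → ℝ := fun y => φp * clampE 0 R y + φm * clampE 0 R (-y) with hwfdef
  have hwf_cont : Continuous wf :=
    (continuous_const.mul (continuous_clampE 0 R)).add
      (continuous_const.mul ((continuous_clampE 0 R).comp continuous_neg))
  have hwf_le : ∀ s : ℝ, wf (s:EReal) ≤ wtE φp φm (s:EReal) := by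
    intro s
    rw [wtE_split]
    simp only [hwfdef, ← EReal.coe_neg, clampE_coe]
    have l1 : max 0 (min R s) ≤ max 0 s := max_le_max le_rfl (min_le_right _ _)
    have l2 : max 0 (min R (-s)) ≤ max 0 (-s) := max_le_max le_rfl (min_le_right _ _)
    exact add_le_add (mul_le_mul_of_nonneg_left l1 hφp) (mul_le_mul_of_nonneg_left l2 hφm)
  have hwf_ge : ∀ s : ℝ, A + ε ≤ wtE φp φm (s:EReal) → A + ε ≤ wf (s:EReal) := by
    intro s hs
    rw [wtE_split] at hs
    simp only [hwfdef, ← EReal.coe_neg, clampE_coe]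
    rcases lt_trichotomy s 0 with h | h | h
    · have e1 : max (0:ℝ) s = 0 := max_eq_left h.le
      have e2 : max (0:ℝ) (-s) = -s := max_eq_right (by linarith)
      rw [e1, e2] at hs
      have hφm_pos : 0 < φm := by nlinarith
      have e3 : max (0:ℝ) (min R s) = 0 := max_eq_left ((min_le_right _ _).trans h.le)
      rw [e3]
      rcases le_total R (-s) with hr | hr
      · have : min R (-s) = R := min_eq_left hr
        rw [this, max_eq_right (by linarith)]
        have := hRm hφm_pos
        nlinarith
      · have : min R (-s) = -s := min_eq_right hr
        rw [this, max_eq_right (by linarith)]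
        nlinarith
    · subst h; simp at hs; nlinarith
    · have e1 : max (0:ℝ) s = s := max_eq_right h.le
      have e2 : max (0:ℝ) (-s) = 0 := max_eq_left (by linarith)
      rw [e1, e2] at hs
      have hφp_pos : 0 < φp := by nlinarith
      have e3 : max (0:ℝ) (min R (-s)) = 0 := max_eq_left ((min_le_right _ _).trans (by linarith))
      rw [e3]
      rcases le_total R s with hr | hr
      · have : min R s = R := min_eq_left hr
        rw [this, max_eq_right (by linarith)]
        have := hRp hφp_pos
        nlinarith
      · have : min R s = s := min_eq_right hr
        rw [this, max_eq_right (by linarith)]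
        nlinarith
  clear_value wf
  -- the cutoff in the x-variable
  set hfun : EReal → ℝ := fun y => min 1 (max 0 ((2/ε) * (wf y - (A + ε/2)))) with hhdef
  have hfun_cont : Continuous hfun :=
    continuous_const.min (continuous_const.max
      (continuous_const.mul (hwf_cont.sub continuous_const)))
  have hfun_nonneg : ∀ y, 0 ≤ hfun y := fun y =>
    le_min zero_le_one (le_max_left _ _)
  have hfun_le_one : ∀ y, hfun y ≤ 1 := fun y => min_le_left _ _
  have hfun_eq_one : ∀ y, A + ε ≤ wf y → hfun y = 1 := by
    intro y hy
    have h2 : ε/2 ≤ wf y - (A + ε/2) := by linarith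
    have h1 : (1:ℝ) ≤ (2/ε) * (wf y - (A + ε/2)) :=
      calc (1:ℝ) = (2/ε) * (ε/2) := by field_simp
      _ ≤ _ := mul_le_mul_of_nonneg_left h2 (by positivity)
    simp only [hhdef]
    rw [max_eq_right (by linarith), min_eq_left h1]
  have hfun_eq_zero : ∀ y, wf y ≤ A + ε/2 → hfun y = 0 := by
    intro y hy
    have h1 : (2/ε) * (wf y - (A + ε/2)) ≤ 0 :=
      mul_nonpos_of_nonneg_of_nonpos (by positivity) (by linarith)
    simp only [hhdef]
    rw [max_eq_left h1, min_eq_right zero_le_one]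
  have hfun_pos : ∀ y, 0 < hfun y → A + ε/2 < wf y := by
    intro y hy
    by_contra hc
    push_neg at hc
    rw [hfun_eq_zero y hc] at hy
    exact lt_irrefl _ hy
  clear_value hfun
  -- the finitely many large times of `pm0` after `t`
  have hTfin : {u | ∃ i p, pm0 i = some p ∧ p.1 = u ∧ A + ε/2 ≤ wtE φp φm p.2}.Finite := by
    apply Set.Finite.subset ((hrad0 ((A + ε/2) / max φp φm)
      (div_pos hBpos hc0)).image (fun i => (pm0 i).elim 0 Prod.fst))
    rintro u ⟨i, p, hip, rfl, hw⟩
    exact ⟨i, ⟨p, hip, (wtE_big hφp hφm hBpos hw).2.2.2.2⟩, by simp [hip]⟩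
  obtain ⟨γ, hγ0, hγ⟩ : ∃ γ : ℝ, 0 < γ ∧ ∀ u,
      (∃ i p, pm0 i = some p ∧ p.1 = u ∧ A + ε/2 ≤ wtE φp φm p.2) →
      ¬(t < u ∧ u < t + γ) := by
    set T' := {u | ∃ i p, pm0 i = some p ∧ p.1 = u ∧ A + ε/2 ≤ wtE φp φm p.2} ∩ Set.Ioi t
      with hT'def
    have hT'fin : T'.Finite := hTfin.subset Set.inter_subset_left
    by_cases hne : T'.Nonempty
    · have hne' : hT'fin.toFinset.Nonempty := by
        rwa [Set.Finite.toFinset_nonempty]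
      set m := hT'fin.toFinset.min' hne' with hmdef
      have hm_mem : m ∈ T' := by
        have := hT'fin.toFinset.min'_mem hne'
        rwa [Set.Finite.mem_toFinset] at this
      have hmt : t < m := hm_mem.2
      refine ⟨m - t, by linarith, fun u hu ⟨h1, h2⟩ => ?_⟩
      have hu' : u ∈ T' := ⟨hu, h1⟩
      have : m ≤ u := hT'fin.toFinset.min'_le u (by rwa [Set.Finite.mem_toFinset])
      linarith
    · refine ⟨1, one_pos, fun u hu ⟨h1, h2⟩ => hne ⟨u, hu, h1⟩⟩
  -- the cutoff in the time variable
  set gfun : ℝ → ℝ := fun u => max 0 (min 1 ((t + γ - u)/γ)) with hgdef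
  have hg_cont : Continuous gfun :=
    continuous_const.max (continuous_const.min
      ((continuous_const.sub continuous_id).div_const γ))
  have hg_nonneg : ∀ u, 0 ≤ gfun u := fun u => le_max_left _ _
  have hg_eq_one : ∀ u, u ≤ t → gfun u = 1 := by
    intro u hu
    have h1 : (1:ℝ) ≤ (t + γ - u)/γ := by
      rw [le_div_iff₀ hγ0]; linarith
    simp only [hgdef]
    rw [min_eq_left h1, max_eq_right zero_le_one]
  have hg_pos : ∀ u, 0 < gfun u → u < t + γ := by
    intro u hu
    by_contra hc
    push_neg at hc
    have h1 : (t + γ - u)/γ ≤ 0 := div_nonpos_of_nonpos_of_nonneg (by linarith) hγ0.le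
    simp only [hgdef] at hu
    rw [min_eq_right (by linarith), max_eq_left h1] at hu
    exact lt_irrefl _ hu
  clear_value gfun
  -- test function
  set f : ℝ × EReal → ℝ := fun p => gfun p.1 * hfun p.2 with hfdef
  have hf_cont : Continuous f := (hg_cont.comp continuous_fst).mul (hfun_cont.comp continuous_snd)
  have hf_nonneg : ∀ p, 0 ≤ f p := fun p => mul_nonneg (hg_nonneg _) (hfun_nonneg _)
  clear_value f
  set δ := (A + ε/2) / (max φp φm + 1) with hδdef
  have hδ : 0 < δ := by positivity
  have hvan : ∀ p : ℝ × EReal, -(δ:EReal) < p.2 → p.2 < (δ:EReal) → f p = 0 := by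
    intro p h1 h2
    obtain ⟨hnt, hnb, habs⟩ := EReal.abs_toReal_lt h1 h2
    have hps : p.2 = ((p.2.toReal : ℝ) : EReal) := (EReal.coe_toReal hnt hnb).symm
    have hcδ : max φp φm * δ < A + ε/2 := by
      have hlt : max φp φm * δ < (max φp φm + 1) * δ := by nlinarith
      have heq : (max φp φm + 1) * δ = A + ε/2 := by
        rw [hδdef]; field_simp
      linarith
    have hwle : wf p.2 ≤ A + ε/2 := by
      rw [hps]
      calc wf _ ≤ wtE φp φm ((p.2.toReal : ℝ) : EReal) := hwf_le _
        _ ≤ max φp φm * |(((p.2.toReal : ℝ) : EReal)).toReal| := wtE_le hφp hφm _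
        _ = max φp φm * |p.2.toReal| := by rw [EReal.toReal_coe]
        _ ≤ max φp φm * δ := mul_le_mul_of_nonneg_left habs.le (by positivity)
        _ ≤ A + ε/2 := hcδ.le
    simp only [hfdef]
    rw [hfun_eq_zero _ hwle, mul_zero]
  -- the integral against the limit measure vanishes
  have hint0 : ∫ p, f p ∂(pmMeasure pm0) = 0 := by
    rw [integral_pmMeasure hrad0 hδ hf_cont hvan]
    apply Finset.sum_eq_zero
    intro i _
    cases h : pm0 i with
    | none => rfl
    | some p =>
      simp only [Option.elim_some]
      obtain ⟨hnt, hnb⟩ := hfin i p h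
      have hps : p.2 = ((p.2.toReal : ℝ) : EReal) := (EReal.coe_toReal hnt hnb).symm
      rcases le_or_gt p.1 t with hle | hgt
      · have hwle : wf p.2 ≤ A := by
          rw [hps]
          refine (hwf_le _).trans ?_
          rw [← hps, hAdef]
          exact le_phiMaxE hφp hφm hrad0 h hle
        simp only [hfdef]
        rw [hfun_eq_zero _ (by linarith), mul_zero]
      · by_cases hh : hfun p.2 = 0
        · simp only [hfdef]; rw [hh, mul_zero]
        · have hpos : 0 < hfun p.2 := lt_of_le_of_ne (hfun_nonneg _) (Ne.symm hh)
          have hBw : A + ε/2 < wf p.2 := hfun_pos _ hpos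
          have hwtE : A + ε/2 ≤ wtE φp φm p.2 := by
            refine hBw.le.trans ?_
            rw [hps]
            refine (hwf_le _).trans ?_
            rw [← hps]
          have hnear := hγ p.1 ⟨i, p, h, rfl, hwtE⟩
          have hng : ¬ (0 < gfun p.1) := by
            intro hgp
            exact hnear ⟨hgt, hg_pos _ hgp⟩
          have : gfun p.1 = 0 := le_antisymm (not_lt.1 hng) (hg_nonneg _)
          simp only [hfdef]
          rw [this, zero_mul]
  -- conclusion by vague convergence
  have htend := hvague f hf_cont ⟨δ, hδ, hvan⟩
  rw [hint0] at htend
  filter_upwards [htend.eventually (gt_mem_nhds one_pos)] with n hn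
  refine phiMaxE_le (by linarith) fun j q hjq hqt => ?_
  by_contra hgt
  push_neg at hgt
  have h1 : A + ε ≤ wtE φp φm q.2 := hgt.le
  obtain ⟨hqt', hqb', _, habs, hside⟩ := wtE_big hφp hφm hAε h1
  have hqs : q.2 = ((q.2.toReal : ℝ) : EReal) := (EReal.coe_toReal hqt' hqb').symm
  have hone : hfun q.2 = 1 := by
    apply hfun_eq_one
    rw [hqs]
    apply hwf_ge
    rw [← hqs]
    exact h1
  have hfq : f q = 1 := by
    simp only [hfdef]
    rw [hg_eq_one _ hqt, hone, one_mul]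
  have hδle : δ ≤ (A + ε) / max φp φm := by
    rw [hδdef, div_le_div_iff₀ (by positivity) hc0]
    nlinarith
  have hmem : j ∈ ((hrad n) δ hδ).toFinset := by
    rw [Set.Finite.mem_toFinset]
    refine ⟨q, hjq, ?_⟩
    rcases hside with hL | hR
    · left
      refine hL.trans ?_
      rw [← EReal.coe_neg, ← EReal.coe_neg]
      exact EReal.coe_le_coe_iff.2 (by linarith)
    · right
      refine le_trans ?_ hR
      exact EReal.coe_le_coe_iff.2 hδle
  have hsum : 1 ≤ ∫ p, f p ∂(pmMeasure (pm n)) := by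
    rw [integral_pmMeasure (hrad n) hδ hf_cont hvan]
    have := Finset.single_le_sum (f := fun i => (pm n i).elim 0 f)
      (fun i _ => by
        cases h : pm n i with
        | none => simp [h]
        | some p => simp only [h, Option.elim_some]; exact hf_nonneg p) hmem
    simp only [hjq, Option.elim_some, hfq] at this
    exact this
  linarith

end Upper

section Lower
variable {φp φm : ℝ} {pm : ℕ → ℕ → Option (ℝ × EReal)} {pm0 : ℕ → Option (ℝ × EReal)}

set_option maxHeartbeats 1000000 in
lemma eventually_near (hφp : 0 ≤ φp) (hφm : 0 ≤ φm)
    (hrad : ∀ n, pmRadon (pm n)) (hrad0 : pmRadon pm0)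
    (hvague : VagueTendsto pm pm0) {i : ℕ} {p : ℝ × EReal} (hip : pm0 i = some p)
    (hnt : p.2 ≠ ⊤) (hnb : p.2 ≠ ⊥) (hnz : p.2 ≠ 0) {t ε : ℝ} (hpt : p.1 < t) (hε : 0 < ε) :
    ∀ᶠ n in atTop, ∃ j q, pm n j = some q ∧ q.1 ≤ t ∧
      wtE φp φm p.2 - ε < wtE φp φm q.2 := by
  classical
  set x₀ := p.2.toReal with hx₀def
  have hps : p.2 = ((x₀ : ℝ) : EReal) := (EReal.coe_toReal hnt hnb).symm
  have hx0 : x₀ ≠ 0 := by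
    intro h
    apply hnz
    rw [hps, h]
    rfl
  have habs0 : 0 < |x₀| := abs_pos.2 hx0
  set M := |x₀| + 1 with hMdef
  have hM0 : 0 < M := by positivity
  set K := max (max 1 (2/|x₀|)) (max φp φm / ε + 1) with hKdef
  have hK1 : (1:ℝ) ≤ K := le_trans (le_max_left _ _) (le_max_left _ _)
  have hKpos : 0 < K := lt_of_lt_of_le one_pos hK1
  have hK2 : 2/|x₀| ≤ K := le_trans (le_max_right _ _) (le_max_left _ _)
  have hKc : max φp φm / ε + 1 ≤ K := le_max_right _ _
  have hc0 : 0 ≤ max φp φm := le_trans hφp (le_max_left _ _)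
  have hKinv : 1/K ≤ |x₀|/2 := by
    rw [div_le_div_iff₀ hKpos (by norm_num : (0:ℝ) < 2)]
    calc (1:ℝ) * 2 = (2/|x₀|) * |x₀| := by field_simp
    _ ≤ K * |x₀| := mul_le_mul_of_nonneg_right hK2 habs0.le
    _ = |x₀| * K := mul_comm _ _
  have hKeps : max φp φm / K < ε := by
    rw [div_lt_iff₀ hKpos]
    have h1 : ε * (max φp φm / ε + 1) = max φp φm + ε := by field_simp
    nlinarith [mul_le_mul_of_nonneg_left hKc hε.le]
  clear_value K
  -- truncation
  set tr : EReal → ℝ := fun y => clampE (-M) M y with htrdef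
  have htr_cont : Continuous tr := continuous_clampE _ _
  have htr_coe : ∀ s : ℝ, tr (s:EReal) = max (-M) (min M s) := fun s => clampE_coe _ _ _
  have htr_top : tr ⊤ = M := by
    rw [htrdef]
    simp only [clampE_top]
    exact max_eq_right (by linarith)
  have htr_bot : tr ⊥ = -M := by rw [htrdef]; exact clampE_bot _ _
  clear_value tr
  have htr_x₀ : tr ((x₀ : ℝ) : EReal) = x₀ := by
    rw [htr_coe]
    have h1 : min M x₀ = x₀ := min_eq_right (by cases abs_cases x₀ <;> linarith [hM0])
    rw [h1]
    exact max_eq_right (by cases abs_cases x₀ <;> linarith [hM0])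
  -- the bump function
  set hfun : EReal → ℝ := fun y => max 0 (1 - K * |tr y - x₀|) with hhdef
  have hfun_cont : Continuous hfun :=
    continuous_const.max (continuous_const.sub
      (continuous_const.mul ((htr_cont.sub continuous_const).abs)))
  have hfun_nonneg : ∀ y, 0 ≤ hfun y := fun y => le_max_left _ _
  have hfun_le_one : ∀ y, hfun y ≤ 1 := by
    intro y
    simp only [hhdef]
    apply max_le (by norm_num)
    nlinarith [abs_nonneg (tr y - x₀), hKpos]
  have hfun_one : hfun (((x₀:ℝ)):EReal) = 1 := by
    simp only [hhdef]
    rw [htr_x₀, sub_self, abs_zero, mul_zero, sub_zero]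
    exact max_eq_right zero_le_one
  have hfun_zero : ∀ y, 1/K ≤ |tr y - x₀| → hfun y = 0 := by
    intro y hy
    simp only [hhdef]
    apply max_eq_left
    have : 1 ≤ K * |tr y - x₀| := by
      calc (1:ℝ) = K * (1/K) := by field_simp
      _ ≤ K * |tr y - x₀| := mul_le_mul_of_nonneg_left hy hKpos.le
    linarith
  have hfun_pos : ∀ y, 0 < hfun y → ∃ s : ℝ, y = ((s:ℝ):EReal) ∧ |s - x₀| < 1/K := by
    intro y hy
    have hlt : |tr y - x₀| < 1/K := by
      by_contra hc
      push_neg at hc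
      rw [hfun_zero y hc] at hy
      exact lt_irrefl _ hy
    have hM1 : (1:ℝ) ≤ |M - x₀| := by
      cases abs_cases x₀ with
      | inl h => rw [abs_of_nonneg (by linarith : (0:ℝ) ≤ M - x₀)]; simp only [hMdef]; linarith
      | inr h => rw [abs_of_nonneg (by linarith : (0:ℝ) ≤ M - x₀)]; simp only [hMdef]; linarith
    have hM2 : (1:ℝ) ≤ |-M - x₀| := by
      cases abs_cases x₀ with
      | inl h => rw [abs_of_nonpos (by linarith : -M - x₀ ≤ 0)]; simp only [hMdef]; linarith
      | inr h => rw [abs_of_nonpos (by linarith : -M - x₀ ≤ 0)]; simp only [hMdef]; linarith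
    have hK1' : 1/K ≤ 1 := by
      rw [div_le_one hKpos]; exact hK1
    induction y using EReal.rec with
    | bot =>
      rw [htr_bot] at hlt
      linarith
    | coe s =>
      rw [htr_coe] at hlt
      rcases le_total s M with h1 | h1
      · rcases le_total (-M) s with h2 | h2
        · refine ⟨s, rfl, ?_⟩
          rwa [min_eq_right h1, max_eq_right h2] at hlt
        · rw [min_eq_right h1, max_eq_left h2] at hlt
          linarith
      · rw [min_eq_left h1, max_eq_right (by linarith)] at hlt
        linarith
    | top =>
      rw [htr_top] at hlt
      linarith
  clear_value hfun
  -- weight comparison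
  have hwt : ∀ s : ℝ, |s - x₀| < 1/K → wtE φp φm ((x₀:ℝ):EReal) - ε < wtE φp φm ((s:ℝ):EReal) := by
    intro s hs
    have hs2 : |s - x₀| < |x₀|/2 := lt_of_lt_of_le hs hKinv
    have hgap : max φp φm * |s - x₀| < ε := by
      rcases eq_or_lt_of_le hc0 with h | h
      · rw [← h, zero_mul]; exact hε
      · calc max φp φm * |s - x₀| < max φp φm * (1/K) :=
              mul_lt_mul_of_pos_left hs h
        _ = max φp φm / K := by ring
        _ < ε := hKeps
    rw [wtE_split, wtE_split]
    cases abs_cases x₀ with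
    | inl hcase =>
      -- x₀ > 0
      have hx₀pos : 0 < x₀ := lt_of_le_of_ne (by linarith [habs0]) (Ne.symm hx0)
      have hspos : 0 < s := by cases abs_cases (s - x₀) <;> linarith
      rw [max_eq_right hx₀pos.le, max_eq_left (by linarith), max_eq_right hspos.le,
        max_eq_left (by linarith)]
      have h1 : φp * x₀ - φp * s ≤ φp * |s - x₀| := by
        cases abs_cases (s - x₀) <;> nlinarith
      have h2 : φp * |s - x₀| ≤ max φp φm * |s - x₀| :=
        mul_le_mul_of_nonneg_right (le_max_left _ _) (abs_nonneg _)
      nlinarith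
    | inr hcase =>
      -- x₀ < 0
      have hx₀neg : x₀ < 0 := lt_of_le_of_ne (by linarith [habs0]) hx0
      have hsneg : s < 0 := by cases abs_cases (s - x₀) <;> linarith
      rw [max_eq_left hx₀neg.le, max_eq_right (by linarith), max_eq_left hsneg.le,
        max_eq_right (by linarith)]
      have h1 : φm * (-x₀) - φm * (-s) ≤ φm * |s - x₀| := by
        cases abs_cases (s - x₀) <;> nlinarith
      have h2 : φm * |s - x₀| ≤ max φp φm * |s - x₀| :=
        mul_le_mul_of_nonneg_right (le_max_right _ _) (abs_nonneg _)
      nlinarith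
  -- time cutoff
  have hd0 : 0 < t - p.1 := by linarith
  set gfun : ℝ → ℝ := fun u => max 0 (min 1 ((t - u)/(t - p.1))) with hgdef
  have hg_cont : Continuous gfun :=
    continuous_const.max (continuous_const.min
      ((continuous_const.sub continuous_id).div_const _))
  have hg_nonneg : ∀ u, 0 ≤ gfun u := fun u => le_max_left _ _
  have hg_one : gfun p.1 = 1 := by
    simp only [hgdef]
    rw [div_self hd0.ne', min_self, max_eq_right zero_le_one]
  have hg_pos : ∀ u, 0 < gfun u → u ≤ t := by
    intro u hu
    by_contra hc
    push_neg at hc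
    have h1 : (t - u)/(t - p.1) ≤ 0 := div_nonpos_of_nonpos_of_nonneg (by linarith) hd0.le
    simp only [hgdef] at hu
    rw [min_eq_right (by linarith), max_eq_left h1] at hu
    exact lt_irrefl _ hu
  clear_value gfun
  -- test function
  set f : ℝ × EReal → ℝ := fun q => gfun q.1 * hfun q.2 with hfdef
  have hf_cont : Continuous f := (hg_cont.comp continuous_fst).mul (hfun_cont.comp continuous_snd)
  have hf_nonneg : ∀ q, 0 ≤ f q := fun q => mul_nonneg (hg_nonneg _) (hfun_nonneg _)
  clear_value f
  set δ := |x₀|/2 with hδdef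
  have hδ : 0 < δ := by positivity
  have hvan : ∀ q : ℝ × EReal, -(δ:EReal) < q.2 → q.2 < (δ:EReal) → f q = 0 := by
    intro q h1 h2
    obtain ⟨hqt, hqb, habs⟩ := EReal.abs_toReal_lt h1 h2
    set s := q.2.toReal with hsdef
    have hqs : q.2 = ((s:ℝ):EReal) := (EReal.coe_toReal hqt hqb).symm
    have htrs : tr q.2 = s := by
      rw [hqs, htr_coe]
      rw [hδdef] at habs
      have hsM : |s| ≤ M := by rw [hMdef]; cases abs_cases s <;> cases abs_cases x₀ <;> linarith
      rw [min_eq_right (by cases abs_cases s <;> linarith),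
        max_eq_right (by cases abs_cases s <;> linarith)]
    have hfar : 1/K ≤ |tr q.2 - x₀| := by
      rw [htrs]
      have : |x₀| - |s| ≤ |s - x₀| := by
        calc |x₀| - |s| ≤ |x₀ - s| := abs_sub_abs_le_abs_sub _ _
        _ = |s - x₀| := abs_sub_comm _ _
      linarith [hKinv]
    simp only [hfdef]
    rw [hfun_zero _ hfar, mul_zero]
  have hint0 : 1 ≤ ∫ q, f q ∂(pmMeasure pm0) := by
    rw [integral_pmMeasure hrad0 hδ hf_cont hvan]
    have hfp : f p = 1 := by
      simp only [hfdef]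
      rw [hg_one, hps, hfun_one, one_mul]
    have hmem : i ∈ (hrad0 δ hδ).toFinset := by
      rw [Set.Finite.mem_toFinset]
      refine ⟨p, hip, ?_⟩
      rcases abs_cases x₀ with ⟨h, _⟩ | ⟨h, _⟩
      · right
        rw [hps]
        apply EReal.coe_le_coe_iff.2
        simp only [hδdef]
        linarith
      · left
        rw [hps, ← EReal.coe_neg]
        apply EReal.coe_le_coe_iff.2
        simp only [hδdef]
        linarith
    have := Finset.single_le_sum (f := fun j => (pm0 j).elim 0 f)
      (fun j _ => by
        cases h : pm0 j with
        | none => simp [h]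
        | some q => simp only [h, Option.elim_some]; exact hf_nonneg q) hmem
    simp only [hip, Option.elim_some, hfp] at this
    exact this
  have htend := hvague f hf_cont ⟨δ, hδ, hvan⟩
  have hev : ∀ᶠ n in atTop, 0 < ∫ q, f q ∂(pmMeasure (pm n)) :=
    htend.eventually (lt_mem_nhds (by linarith : (0:ℝ) < ∫ q, f q ∂(pmMeasure pm0)))
  filter_upwards [hev] with n hn
  rw [integral_pmMeasure (hrad n) hδ hf_cont hvan] at hn
  have hex : ∃ j ∈ (hrad n δ hδ).toFinset, 0 < (pm n j).elim 0 f := by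
    by_contra hno
    push_neg at hno
    have : ∑ j ∈ (hrad n δ hδ).toFinset, (pm n j).elim 0 f ≤ 0 :=
      Finset.sum_nonpos fun j hj => hno j hj
    linarith
  obtain ⟨j, -, hjpos⟩ := hex
  cases h : pm n j with
  | none => rw [h] at hjpos; exact absurd hjpos (by simp)
  | some q =>
    rw [h] at hjpos
    simp only [Option.elim_some] at hjpos
    have hgq : 0 < gfun q.1 := by
      by_contra hc
      push_neg at hc
      simp only [hfdef] at hjpos
      nlinarith [hfun_nonneg q.2]
    have hhq : 0 < hfun q.2 := by
      by_contra hc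
      push_neg at hc
      simp only [hfdef] at hjpos
      nlinarith [hg_nonneg q.1]
    obtain ⟨s, hqs, hclose⟩ := hfun_pos _ hhq
    refine ⟨j, q, h, hg_pos _ hgq, ?_⟩
    rw [hps, hqs]
    exact hwt s hclose

end Lower

lemma wtE_zero {φp φm : ℝ} : wtE φp φm 0 = 0 := by simp [wtE]

section Part1
variable {φp φm : ℝ} {pm : ℕ → ℕ → Option (ℝ × EReal)} {pm0 : ℕ → Option (ℝ × EReal)}

lemma tendsto_phiMaxE (hφp : 0 ≤ φp) (hφm : 0 ≤ φm)
    (hrad : ∀ n, pmRadon (pm n)) (hrad0 : pmRadon pm0)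
    (hη : ∀ i p, pm0 i = some p → p.1 ≠ 0 ∧ p.1 ≠ 1 ∧ p.2 ≠ ⊤ ∧ p.2 ≠ ⊥)
    (hvague : VagueTendsto pm pm0) (t : ℝ)
    (hatom : ∀ i p, pm0 i = some p → p.1 ≠ t) :
    Filter.Tendsto (fun n => phiMaxE φp φm (pm n) t) atTop (𝓝 (phiMaxE φp φm pm0 t)) := by
  have hfin : ∀ i p, pm0 i = some p → p.2 ≠ ⊤ ∧ p.2 ≠ ⊥ := fun i p hip =>
    ⟨(hη i p hip).2.2.1, (hη i p hip).2.2.2⟩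
  rw [Metric.tendsto_nhds]
  intro ε hε
  have hA0 : 0 ≤ phiMaxE φp φm pm0 t := phiMaxE_nonneg hφp hφm hrad0 t
  have hupper := eventually_phiMaxE_le hφp hφm hrad hrad0 hfin hvague t (half_pos hε)
  have hlower : ∀ᶠ n in atTop, phiMaxE φp φm pm0 t - ε < phiMaxE φp φm (pm n) t := by
    rcases lt_or_ge (phiMaxE φp φm pm0 t) ε with hA | hA
    · exact Filter.Eventually.of_forall fun n =>
        lt_of_lt_of_le (by linarith) (phiMaxE_nonneg hφp hφm (hrad n) t)
    · have hc : 0 ≤ phiMaxE φp φm pm0 t - ε/2 := by linarith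
      obtain ⟨i, p, hip, hple, hgt⟩ := lt_phiMaxE (φp := φp) (φm := φm) (pts := pm0) (t := t) hc (by linarith)
      obtain ⟨h0, h1, hnt, hnb⟩ := hη i p hip
      have hplt : p.1 < t := lt_of_le_of_ne hple (hatom i p hip)
      have hnz : p.2 ≠ 0 := by
        intro hz
        rw [hz, wtE_zero] at hgt
        linarith
      filter_upwards [eventually_near hφp hφm hrad hrad0 hvague hip hnt hnb hnz hplt
        (half_pos hε)] with n ⟨j, q, hjq, hqt, hwq⟩
      have := le_phiMaxE hφp hφm (hrad n) hjq hqt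
      linarith
  filter_upwards [hupper, hlower] with n h1 h2
  rw [Real.dist_eq, abs_lt]
  constructor <;> linarith

end Part1

section RC
variable {φp φm : ℝ} {pts : ℕ → Option (ℝ × EReal)}

/-- Right-continuity surrogate for `phiMaxE`. -/
lemma phiMaxE_rc (hφp : 0 ≤ φp) (hφm : 0 ≤ φm) (hrad : pmRadon pts)
    {s z b : ℝ} (hsz : phiMaxE φp φm pts s < z) (hsb : s < b) :
    ∃ u, s < u ∧ u ≤ b ∧ phiMaxE φp φm pts u ≤ z := by
  classical
  have hz0 : 0 < z := lt_of_le_of_lt (phiMaxE_nonneg hφp hφm hrad s) hsz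
  by_cases hc0 : 0 < max φp φm
  case neg =>
    push_neg at hc0
    refine ⟨b, hsb, le_rfl, phiMaxE_le hz0.le fun i p hip hpt => ?_⟩
    have h1 := wtE_le hφp hφm p.2
    nlinarith [abs_nonneg p.2.toReal, mul_nonpos_of_nonpos_of_nonneg hc0 (abs_nonneg p.2.toReal)]
  case pos =>
  have hUfin : {u | ∃ i p, pts i = some p ∧ p.1 = u ∧ z ≤ wtE φp φm p.2}.Finite := by
    apply Set.Finite.subset ((hrad (z / max φp φm)
      (div_pos hz0 hc0)).image (fun i => (pts i).elim 0 Prod.fst))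
    rintro u ⟨i, p, hip, rfl, hw⟩
    exact ⟨i, ⟨p, hip, (wtE_big hφp hφm hz0 hw).2.2.2.2⟩, by simp [hip]⟩
  set V := {u | ∃ i p, pts i = some p ∧ p.1 = u ∧ z ≤ wtE φp φm p.2} ∩ Set.Ioi s with hVdef
  have hVfin : V.Finite := hUfin.subset Set.inter_subset_left
  by_cases hne : V.Nonempty
  · have hne' : hVfin.toFinset.Nonempty := by rwa [Set.Finite.toFinset_nonempty]
    set mV := hVfin.toFinset.min' hne' with hmdef
    have hm_mem : mV ∈ V := by
      have := hVfin.toFinset.min'_mem hne'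
      rwa [Set.Finite.mem_toFinset] at this
    have hmt : s < mV := hm_mem.2
    refine ⟨min b ((s + mV)/2), lt_min hsb (by linarith), min_le_left _ _, ?_⟩
    apply phiMaxE_le hz0.le
    intro i p hip hpt
    by_contra hw
    push_neg at hw
    rcases le_or_gt p.1 s with hps | hps
    · have := le_phiMaxE hφp hφm hrad hip hps
      linarith
    · have hmem : p.1 ∈ V := ⟨⟨i, p, hip, rfl, hw.le⟩, hps⟩
      have h1 : mV ≤ p.1 := hVfin.toFinset.min'_le _ (by rwa [Set.Finite.mem_toFinset])
      have h2 : p.1 ≤ (s + mV)/2 := le_trans hpt (min_le_right _ _)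
      linarith
  · refine ⟨b, hsb, le_rfl, ?_⟩
    apply phiMaxE_le hz0.le
    intro i p hip hpt
    by_contra hw
    push_neg at hw
    rcases le_or_gt p.1 s with hps | hps
    · have := le_phiMaxE hφp hφm hrad hip hps
      linarith
    · exact hne ⟨p.1, ⟨i, p, hip, rfl, hw.le⟩, hps⟩

/-- Covering property: for monotone right-continuous `phiMaxE`, every intermediate
value is attained on the completed graph. -/
lemma phiMaxE_covering (hφp : 0 ≤ φp) (hφm : 0 ≤ φm) (hrad : pmRadon pts)
    {a b z : ℝ} (ha : 0 ≤ a) (hab : a ≤ b)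
    (hza : phiMaxE φp φm pts a ≤ z) (hzb : z ≤ phiMaxE φp φm pts b) :
    ∃ s ∈ Set.Icc a b, llim (phiMaxE φp φm pts) s ≤ z ∧ z ≤ phiMaxE φp φm pts s := by
  classical
  set F := phiMaxE φp φm pts with hFdef
  have hmono : Monotone F := phiMaxE_mono hφp hφm hrad
  set S := {u | u ∈ Set.Icc a b ∧ F u ≤ z} with hSdef
  have haS : a ∈ S := ⟨⟨le_rfl, hab⟩, hza⟩
  have hbddS : BddAbove S := ⟨b, fun u hu => hu.1.2⟩
  set s := sSup S with hs
  have hsa : a ≤ s := le_csSup hbddS haS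
  have hsb : s ≤ b := csSup_le ⟨a, haS⟩ fun u hu => hu.1.2
  have hzs : z ≤ F s := by
    by_contra hc
    push_neg at hc
    rcases eq_or_lt_of_le hsb with he | hlt
    · rw [he] at hc
      linarith
    · obtain ⟨u, hsu, hub, hFu⟩ := phiMaxE_rc hφp hφm hrad hc hlt
      have : u ∈ S := ⟨⟨le_trans hsa hsu.le, hub⟩, hFu⟩
      have := le_csSup hbddS this
      linarith
  have hall : ∀ u, u < s → F u ≤ z := by
    intro u hu
    rcases le_or_gt u a with hua | hua
    · exact le_trans (hmono hua) hza
    · obtain ⟨v, hvS, huv⟩ := exists_lt_of_lt_csSup ⟨a, haS⟩ hu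
      exact le_trans (hmono huv.le) hvS.2
  refine ⟨s, ⟨hsa, hsb⟩, ?_, hzs⟩
  unfold llim
  split_ifs with h0
  · have : a = 0 := le_antisymm (by linarith) ha
    rw [← this]
    exact hza
  · push_neg at h0
    rw [hmono.leftLim_eq_sSup (f := F) (x := s)]
    apply csSup_le (Set.Nonempty.image F ⟨s - 1, by simp⟩)
    rintro _ ⟨u, hu, rfl⟩
    exact hall u hu

end RC

section Graph

lemma llim_zero (f : ℝ → ℝ) : llim f 0 = f 0 := by simp [llim]

lemma dRect_nonneg (a b : ℝ × ℝ) : 0 ≤ dRect a b :=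
  le_max_of_le_left (abs_nonneg _)

lemma mem_completedGraph {f : ℝ → ℝ} {s z : ℝ} (hs : s ∈ Set.Icc (0:ℝ) 1)
    (h1 : llim f s ≤ z) (h2 : z ≤ f s) : (s, z) ∈ completedGraph f := by
  refine ⟨hs, ?_⟩
  rcases eq_or_lt_of_le (h1.trans h2) with he | hlt
  · have hz : z = f s := le_antisymm h2 (he ▸ h1)
    exact ⟨0, ⟨le_rfl, zero_le_one⟩, by simp [hz]⟩
  · refine ⟨(f s - z)/(f s - llim f s), ⟨div_nonneg (by linarith) (by linarith),
      (div_le_one (by linarith)).2 (by linarith)⟩, ?_⟩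
    have key : (f s - z)/(f s - llim f s) * llim f s
        + (1 - (f s - z)/(f s - llim f s)) * f s = z := by
      have hne : f s - llim f s ≠ 0 := sub_ne_zero.2 hlt.ne'
      field_simp [hne]
      ring
    exact key.symm

lemma completedGraph_bounds {f : ℝ → ℝ} (hmono : Monotone f) {a : ℝ × ℝ}
    (h : a ∈ completedGraph f) :
    a.1 ∈ Set.Icc (0:ℝ) 1 ∧ llim f a.1 ≤ a.2 ∧ a.2 ≤ f a.1 := by
  obtain ⟨hti, lam, hlam, heq⟩ := h
  have hll : llim f a.1 ≤ f a.1 := by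
    unfold llim
    split_ifs with h0
    · have h1 : a.1 = 0 := le_antisymm h0 hti.1
      rw [h1]
    · exact hmono.leftLim_le le_rfl
  refine ⟨hti, ?_, ?_⟩
  · nlinarith [hlam.1, hlam.2]
  · nlinarith [hlam.1, hlam.2]

lemma completedGraph_nonempty (f : ℝ → ℝ) : ((0:ℝ), f 0) ∈ completedGraph f :=
  mem_completedGraph (by norm_num) (le_of_eq (llim_zero f)) le_rfl

/-- Key estimate: one-sided graph gap via a grid. -/
lemma graphGap_le {f g : ℝ → ℝ} (hfmono : Monotone f) (hgmono : Monotone g)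
    (hgcov : ∀ a b z : ℝ, 0 ≤ a → a ≤ b → g a ≤ z → z ≤ g b →
      ∃ s ∈ Set.Icc a b, llim g s ≤ z ∧ z ≤ g s)
    {k : ℕ} {tg : ℕ → ℝ} (hk : 1 ≤ k) (ht0 : tg 0 = 0) (htk : tg k = 1)
    (hadj : ∀ j, j < k → tg j < tg (j+1)) (hrange : ∀ j ≤ k, tg j ∈ Set.Icc (0:ℝ) 1)
    {m d : ℝ} (hm : 0 ≤ m) (hd : 0 ≤ d) (hmesh : ∀ j, j < k → tg (j+1) - tg j ≤ m)
    (hclose : ∀ j ≤ k, |f (tg j) - g (tg j)| ≤ d) :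
    graphGap f g ≤ max m d := by
  classical
  apply Real.sSup_le _ (le_max_of_le_left hm)
  rintro v ⟨a, haf, rfl⟩
  obtain ⟨hti, hz1, hz2⟩ := completedGraph_bounds hfmono haf
  suffices hb : ∃ b ∈ completedGraph g, dRect a b ≤ max m d by
    obtain ⟨b, hbg, hdist⟩ := hb
    refine le_trans (csInf_le ⟨0, ?_⟩ ⟨b, hbg, rfl⟩) hdist
    rintro w ⟨c, -, rfl⟩
    exact dRect_nonneg _ _
  by_cases h0 : a.1 = 0
  · refine ⟨((0:ℝ), g 0), completedGraph_nonempty g, ?_⟩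
    have hz : a.2 = f 0 := by
      rw [h0, llim_zero] at hz1
      rw [h0] at hz2
      linarith
    have hfg : |f 0 - g 0| ≤ d := by
      have := hclose 0 (Nat.zero_le k)
      rwa [ht0] at this
    rw [dRect]
    apply max_le
    · simp [h0, hm, le_max_of_le_left hm]
    · simp only [hz]
      exact le_max_of_le_right hfg
  · have h0' : 0 < a.1 := lt_of_le_of_ne hti.1 (Ne.symm h0)
    -- find the grid interval containing a.1
    obtain ⟨j, hjk, hj1, hj2⟩ : ∃ j, j < k ∧ tg j < a.1 ∧ a.1 ≤ tg (j+1) := by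
      have hP0 : tg 0 < a.1 := by rw [ht0]; exact h0'
      have hspec : tg (Nat.findGreatest (fun j => tg j < a.1) k) < a.1 :=
        Nat.findGreatest_spec (P := fun j => tg j < a.1) (Nat.zero_le k) hP0
      have hle : Nat.findGreatest (fun j => tg j < a.1) k ≤ k :=
        Nat.findGreatest_le k
      have hlt : Nat.findGreatest (fun j => tg j < a.1) k < k := by
        rcases eq_or_lt_of_le hle with he | hlt
        · exfalso
          rw [he, htk] at hspec
          exact absurd hti.2 (not_le.2 hspec)
        · exact hlt
      refine ⟨Nat.findGreatest (fun j => tg j < a.1) k, hlt, hspec, ?_⟩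
      have := Nat.findGreatest_is_greatest (P := fun j => tg j < a.1)
        (lt_add_one _) hlt
      exact not_lt.1 this
    have hjk1 : j + 1 ≤ k := hjk
    have hgj : g (tg j) ≤ g (tg (j+1)) := hgmono (hadj j hjk).le
    -- bounds on a.2
    have hub : a.2 ≤ g (tg (j+1)) + d := by
      have h1 : a.2 ≤ f (tg (j+1)) := le_trans hz2 (hfmono hj2)
      have h2 := hclose (j+1) hjk1
      cases abs_cases (f (tg (j+1)) - g (tg (j+1))) <;> linarith
    have hlb : g (tg j) - d ≤ a.2 := by
      have hllim : f (tg j) ≤ llim f a.1 := by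
        unfold llim
        rw [if_neg (not_le.2 h0')]
        exact hfmono.le_leftLim hj1
      have h2 := hclose j hjk.le
      cases abs_cases (f (tg j) - g (tg j)) <;> linarith
    set zs := max (g (tg j)) (min a.2 (g (tg (j+1)))) with hzs
    have hzs1 : g (tg j) ≤ zs := le_max_left _ _
    have hzs2 : zs ≤ g (tg (j+1)) := max_le hgj (min_le_right _ _)
    have hdiff : |a.2 - zs| ≤ d := by
      rw [hzs]
      rcases le_total a.2 (g (tg j)) with hc1 | hc1
      · rw [min_eq_left (le_trans hc1 hgj), max_eq_left hc1]
        rw [abs_of_nonpos (by linarith)]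
        linarith
      · rcases le_total a.2 (g (tg (j+1))) with hc2 | hc2
        · rw [min_eq_left hc2, max_eq_right hc1]
          simp [hd]
        · rw [min_eq_right hc2, max_eq_right hgj]
          rw [abs_of_nonneg (by linarith)]
          linarith
    obtain ⟨s, hsmem, hg1, hg2⟩ := hgcov (tg j) (tg (j+1)) zs
      (hrange j hjk.le).1 (hadj j hjk).le hzs1 hzs2
    refine ⟨(s, zs), mem_completedGraph
      ⟨le_trans (hrange j hjk.le).1 hsmem.1, le_trans hsmem.2 (hrange (j+1) hjk1).2⟩
      hg1 hg2, ?_⟩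
    rw [dRect]
    apply max_le
    · apply le_max_of_le_left
      have h1 := hmesh j hjk
      rw [abs_le]
      constructor
      · simp only []
        have := hsmem.2
        linarith
      · simp only []
        have := hsmem.1
        linarith
    · exact le_max_of_le_right hdiff

end Graph

lemma exists_good_in_Ioo {B : Set ℝ} (hB : B.Countable) {a b : ℝ} (hab : a < b) :
    ∃ x, x ∈ Set.Ioo a b ∧ x ∉ B := by
  by_contra h
  push_neg at h
  have hsub : Set.Ioo a b ⊆ B := h
  have h1 : volume (Set.Ioo a b) = 0 := measure_mono_null hsub (hB.measure_zero volume)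
  rw [Real.volume_Ioo, ENNReal.ofReal_eq_zero] at h1
  linarith

lemma exists_good_grid {pm0 : ℕ → Option (ℝ × EReal)}
    (hη : ∀ i p, pm0 i = some p → p.1 ≠ 0 ∧ p.1 ≠ 1 ∧ p.2 ≠ ⊤ ∧ p.2 ≠ ⊥)
    {m : ℝ} (hm : 0 < m) :
    ∃ (k : ℕ) (tg : ℕ → ℝ), 1 ≤ k ∧ tg 0 = 0 ∧ tg k = 1 ∧
      (∀ j, j < k → tg j < tg (j+1)) ∧ (∀ j ≤ k, tg j ∈ Set.Icc (0:ℝ) 1) ∧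
      (∀ j, j < k → tg (j+1) - tg j ≤ m) ∧
      (∀ j ≤ k, ∀ i p, pm0 i = some p → p.1 ≠ tg j) := by
  classical
  set B := ⋃ i : ℕ, {u : ℝ | ∃ p, pm0 i = some p ∧ p.1 = u} with hBdef
  have hBc : B.Countable := by
    apply Set.countable_iUnion
    intro i
    apply Set.Subsingleton.countable
    rintro u ⟨p, hp, rfl⟩ u' ⟨p', hp', rfl⟩
    rw [hp] at hp'
    rw [Option.some.inj hp']
  set k := ⌈3/m⌉₊ + 1 with hkdef
  have hk1 : 1 ≤ k := Nat.le_add_left 1 _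
  have hkR : (3:ℝ)/m ≤ (k:ℝ) := by
    have := Nat.le_ceil (3/m)
    push_cast [hkdef]
    linarith
  have hk0 : (0:ℝ) < (k:ℝ) := lt_of_lt_of_le (by positivity) hkR
  have hgap : 3/(2*(k:ℝ)) ≤ m := by
    rw [div_le_iff₀ (by positivity)]
    have h1 : 3 ≤ m * (k:ℝ) := by
      calc (3:ℝ) = m * (3/m) := by field_simp
      _ ≤ m * k := mul_le_mul_of_nonneg_left hkR hm.le
    nlinarith
  have hhalf : (1:ℝ)/k - 1/(2*k) = 1/(2*k) := by field_simp; ring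
  have hchoice : ∀ j : ℕ, ∃ x : ℝ,
      x ∈ Set.Ioo ((j:ℝ)/k - 1/(2*k)) ((j:ℝ)/k) ∧ x ∉ B := by
    intro j
    apply exists_good_in_Ioo hBc
    have : 0 < 1/(2*(k:ℝ)) := by positivity
    linarith
  choose c hc1 hc2 using hchoice
  have hcl : ∀ l : ℕ, 1 ≤ l → l < k →
      (1:ℝ)/(2*k) < c l ∧ c l < (l:ℝ)/k ∧ (l:ℝ)/k - 1/(2*k) < c l ∧ c l < 1 := by
    intro l hl1 hlk
    have h1 := (hc1 l).1
    have h2 := (hc1 l).2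
    have hlcast : (1:ℝ) ≤ (l:ℝ) := by exact_mod_cast hl1
    have hlk' : (l:ℝ) + 1 ≤ (k:ℝ) := by exact_mod_cast Nat.succ_le_of_lt hlk
    have h3 : (1:ℝ)/k ≤ (l:ℝ)/k := by gcongr
    have h4 : (l:ℝ)/k < 1 := by
      rw [div_lt_one hk0]; linarith
    exact ⟨by linarith, h2, h1, by linarith⟩
  set tg : ℕ → ℝ := fun j => if j = 0 then 0 else if k ≤ j then 1 else c j with htg
  have htg0 : tg 0 = 0 := by simp [htg]
  have htg1 : ∀ j, k ≤ j → tg j = 1 := by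
    intro j hj
    rw [htg]
    simp only
    rw [if_neg (by omega), if_pos hj]
  have htgc : ∀ j, 1 ≤ j → j < k → tg j = c j := by
    intro j h1 h2
    rw [htg]
    simp only
    rw [if_neg (by omega), if_neg (by omega)]
  have hpos : (0:ℝ) < 1/(2*(k:ℝ)) := by positivity
  refine ⟨k, tg, hk1, htg0, htg1 k le_rfl, ?_, ?_, ?_, ?_⟩
  · -- adjacency
    intro j hj
    rcases Nat.eq_zero_or_pos j with rfl | hj1
    · rw [htg0]
      rcases eq_or_lt_of_le (Nat.one_le_iff_ne_zero.2 (by omega : k ≠ 0)) with hk' | hk'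
      · rw [htg1 1 (by omega)]
        norm_num
      · rw [htgc 1 le_rfl (by omega)]
        have := (hcl 1 le_rfl (by omega)).1
        linarith
    · rw [htgc j hj1 hj]
      rcases eq_or_lt_of_le (Nat.succ_le_of_lt hj) with hk' | hk'
      · rw [htg1 (j+1) (by omega)]
        exact (hcl j hj1 hj).2.2.2
      · rw [htgc (j+1) (by omega) (by omega)]
        have ha := (hcl j hj1 hj).2.1
        have hb := (hcl (j+1) (by omega) (by omega)).2.2.1
        have hcast : ((j+1 : ℕ):ℝ) = (j:ℝ) + 1 := by push_cast; ring
        rw [hcast] at hb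
        have he : ((j:ℝ)+1)/k - 1/(2*k) = (j:ℝ)/k + 1/(2*k) := by
          field_simp
          ring
        linarith
  · -- range
    intro j hjk
    rcases Nat.eq_zero_or_pos j with rfl | hj1
    · rw [htg0]; norm_num
    · rcases eq_or_lt_of_le hjk with he | hlt
      · rw [he, htg1 k le_rfl]; norm_num
      · rw [htgc j hj1 hlt]
        obtain ⟨ha, hb, -, hd⟩ := hcl j hj1 hlt
        exact ⟨by linarith, hd.le⟩
  · -- mesh
    intro j hj
    rcases Nat.eq_zero_or_pos j with rfl | hj1
    · rw [htg0]
      rcases eq_or_lt_of_le (Nat.one_le_iff_ne_zero.2 (by omega : k ≠ 0)) with hk' | hk'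
      · rw [htg1 1 (by omega)]
        have hkcast : (k:ℝ) = 1 := by exact_mod_cast hk'.symm
        rw [hkcast] at hgap
        norm_num at hgap ⊢
        linarith
      · rw [htgc 1 le_rfl (by omega)]
        obtain ⟨-, hb, -, -⟩ := hcl 1 le_rfl (by omega)
        simp only [Nat.cast_one] at hb
        have h13 : (1:ℝ)/k ≤ 3/(2*k) := by
          rw [div_le_div_iff₀ (by positivity) (by positivity)]
          nlinarith
        linarith
    · rw [htgc j hj1 hj]
      rcases eq_or_lt_of_le (Nat.succ_le_of_lt hj) with hk' | hk'
      · rw [htg1 (j+1) (by omega)]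
        obtain ⟨-, -, hclow, -⟩ := hcl j hj1 hj
        have hjc : (j:ℝ) + 1 = (k:ℝ) := by
          have h := hk'
          rw [Nat.succ_eq_add_one] at h
          exact_mod_cast congrArg (Nat.cast (R := ℝ)) h
        have hjcast : (j:ℝ) = (k:ℝ) - 1 := by linarith
        rw [hjcast] at hclow
        have he : 1 - (((k:ℝ)-1)/k - 1/(2*k)) = 3/(2*k) := by
          field_simp
          ring
        linarith
      · rw [htgc (j+1) (by omega) (by omega)]
        obtain ⟨-, -, hclow, -⟩ := hcl j hj1 hj
        obtain ⟨-, hcup, -, -⟩ := hcl (j+1) (by omega) (by omega)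
        have hcast : ((j+1 : ℕ):ℝ) = (j:ℝ) + 1 := by push_cast; ring
        rw [hcast] at hcup
        have he : ((j:ℝ)+1)/k - ((j:ℝ)/k - 1/(2*k)) = 3/(2*k) := by
          field_simp
          ring
        linarith
  · -- avoidance
    intro j hjk i p hip
    rcases Nat.eq_zero_or_pos j with rfl | hj1
    · rw [htg0]
      exact (hη i p hip).1
    · rcases eq_or_lt_of_le hjk with he | hlt
      · rw [he, htg1 k le_rfl]
        exact (hη i p hip).2.1
      · rw [htgc j hj1 hlt]
        intro heq
        apply hc2 j
        rw [hBdef]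
        exact Set.mem_iUnion.2 ⟨i, ⟨p, hip, heq⟩⟩
section Final
variable {φp φm : ℝ} {pm : ℕ → ℕ → Option (ℝ × EReal)} {pm0 : ℕ → Option (ℝ × EReal)}

lemma graphGap_nonneg (f g : ℝ → ℝ) : 0 ≤ graphGap f g := by
  apply Real.sSup_nonneg
  rintro v ⟨a, -, rfl⟩
  apply Real.sInf_nonneg
  rintro w ⟨b, -, rfl⟩
  exact dRect_nonneg _ _

lemma tendsto_dM2 (hφp : 0 ≤ φp) (hφm : 0 ≤ φm)
    (hrad : ∀ n, pmRadon (pm n)) (hrad0 : pmRadon pm0)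
    (hη : ∀ i p, pm0 i = some p → p.1 ≠ 0 ∧ p.1 ≠ 1 ∧ p.2 ≠ ⊤ ∧ p.2 ≠ ⊥)
    (hvague : VagueTendsto pm pm0) :
    Filter.Tendsto (fun n => dM2 (phiMaxE φp φm (pm n)) (phiMaxE φp φm pm0)) atTop (𝓝 0) := by
  rw [NormedAddCommGroup.tendsto_nhds_zero]
  intro ε hε
  obtain ⟨k, tg, hk1, ht0, htk, hadj, hrange, hmesh, havoid⟩ :=
    exists_good_grid hη (half_pos hε)
  have hev : ∀ᶠ n in atTop, ∀ j ∈ Finset.range (k+1),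
      |phiMaxE φp φm (pm n) (tg j) - phiMaxE φp φm pm0 (tg j)| ≤ ε/2 := by
    rw [eventually_all_finset]
    intro j hj
    have hj' : j ≤ k := Nat.lt_succ_iff.1 (Finset.mem_range.1 hj)
    have hconv := tendsto_phiMaxE hφp hφm hrad hrad0 hη hvague (tg j) (havoid j hj')
    filter_upwards [Metric.tendsto_nhds.1 hconv (ε/2) (half_pos hε)] with n hn
    rw [Real.dist_eq] at hn
    exact hn.le
  filter_upwards [hev] with n hn
  have hm2 : (0:ℝ) ≤ ε/2 := (half_pos hε).le
  have hgap1 : graphGap (phiMaxE φp φm (pm n)) (phiMaxE φp φm pm0) ≤ max (ε/2) (ε/2) :=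
    graphGap_le (phiMaxE_mono hφp hφm (hrad n)) (phiMaxE_mono hφp hφm hrad0)
      (fun a b z ha hab hza hzb => phiMaxE_covering hφp hφm hrad0 ha hab hza hzb)
      hk1 ht0 htk hadj hrange hm2 hm2 hmesh
      (fun j hj => hn j (Finset.mem_range.2 (Nat.lt_succ_of_le hj)))
  have hgap2 : graphGap (phiMaxE φp φm pm0) (phiMaxE φp φm (pm n)) ≤ max (ε/2) (ε/2) :=
    graphGap_le (phiMaxE_mono hφp hφm hrad0) (phiMaxE_mono hφp hφm (hrad n))
      (fun a b z ha hab hza hzb => phiMaxE_covering hφp hφm (hrad n) ha hab hza hzb)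
      hk1 ht0 htk hadj hrange hm2 hm2 hmesh
      (fun j hj => by
        rw [abs_sub_comm]
        exact hn j (Finset.mem_range.2 (Nat.lt_succ_of_le hj)))
  have hnn : 0 ≤ dM2 (phiMaxE φp φm (pm n)) (phiMaxE φp φm pm0) :=
    le_max_of_le_left (graphGap_nonneg _ _)
  rw [Real.norm_eq_abs, abs_of_nonneg hnn]
  rw [max_self] at hgap1 hgap2
  have : dM2 (phiMaxE φp φm (pm n)) (phiMaxE φp φm pm0) ≤ ε/2 := max_le hgap1 hgap2
  linarith

end Final

/-- If `ηₙ → η` vaguely in `M_p([0,1] × E)`, with `η` having no atoms on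
`{0,1} × E` nor on `[0,1] × {±∞}`, then the running-maximum functional
`M(σ)(t) = ⋁_{tᵢ ≤ t}|xᵢ|(φ₊1_{xᵢ>0} + φ₋1_{xᵢ<0})` satisfies `M(ηₙ)(t) → M(η)(t)` at
every `t ∈ [0,1]` with `η({t} × E) = 0`, and consequently `d_{M₂}(M(ηₙ), M(η)) → 0`. -/
theorem max_functional_convergence
    (φp φm : ℝ) (hφp : 0 ≤ φp) (hφm : 0 ≤ φm)
    (pm : ℕ → ℕ → Option (ℝ × EReal)) (pm0 : ℕ → Option (ℝ × EReal))
    (hsupp : ∀ n, pmSupported (pm n)) (hsupp0 : pmSupported pm0)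
    (hrad : ∀ n, pmRadon (pm n)) (hrad0 : pmRadon pm0)
    (hη : ∀ i p, pm0 i = some p → p.1 ≠ 0 ∧ p.1 ≠ 1 ∧ p.2 ≠ ⊤ ∧ p.2 ≠ ⊥)
    (hvague : VagueTendsto pm pm0) :
    (∀ t ∈ Set.Icc (0:ℝ) 1, (∀ i p, pm0 i = some p → p.1 ≠ t) →
      Filter.Tendsto (fun n => phiMaxE φp φm (pm n) t) atTop
        (𝓝 (phiMaxE φp φm pm0 t))) ∧
    Filter.Tendsto (fun n => dM2 (phiMaxE φp φm (pm n)) (phiMaxE φp φm pm0)) atTop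
      (𝓝 0) := by
  refine ⟨fun t _ hatom => tendsto_phiMaxE hφp hφm hrad hrad0 hη hvague t hatom, ?_⟩
  exact tendsto_dM2 hφp hφm hrad hrad0 hη hvague

end LinProc
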